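/- The function $h(t) = \frac{1}{2\sin(t/2)} - \frac{1}{t}$, extended by $h(0) = 0$, is continuously differentiable on $[0, \pi]$ and satisfies $|h'(t)| \le 1/\pi$ for all $t \in (0,\pi)$ and $h(\pi) = \frac{1}{2} - \frac{1}{\pi} \le \frac{1}{2}$. -/

import Mathlib

open Real Set Filter Function
open scoped Topology

noncomputable def hfun (t : ℝ) : ℝ :=
  if t = 0 then 0 else 1 / (2 * Real.sin (t / 2)) - 1 / t

/-- `Real.sin` is analytic at every point. -/
lemma analyticAt_rsin (x : ℝ) : AnalyticAt ℝ Real.sin x := by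
  have h : AnalyticAt ℝ Complex.sin (x : ℂ) :=
    (Complex.differentiable_sin.analyticAt _).restrictScalars
  have hc : AnalyticAt ℝ (fun t : ℝ => Complex.sin t) x :=
    h.comp ((Complex.ofRealCLM.analyticAt x))
  have h2 : AnalyticAt ℝ (fun t : ℝ => (Complex.sin t).re) x :=
    ((Complex.reCLM.analyticAt _).comp hc :)
  refine h2.congr ?_
  filter_upwards with t
  simp [Complex.sin_ofReal_re]

lemma analyticAt_g (x : ℝ) : AnalyticAt ℝ (fun t : ℝ => t - 2 * Real.sin (t / 2)) x := by
  have hhalf : AnalyticAt ℝ (fun t : ℝ => t / 2) x :=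
    (analyticAt_id.div analyticAt_const (by norm_num))
  have hcomp : AnalyticAt ℝ (Real.sin ∘ fun t : ℝ => t / 2) x :=
    AnalyticAt.comp (analyticAt_rsin _) hhalf
  exact analyticAt_id.sub (analyticAt_const.mul hcomp)

lemma analyticAt_B0 (x : ℝ) : AnalyticAt ℝ (fun t : ℝ => 2 * Real.sin (t / 2)) x := by
  have hhalf : AnalyticAt ℝ (fun t : ℝ => t / 2) x :=
    (analyticAt_id.div analyticAt_const (by norm_num))
  have hcomp : AnalyticAt ℝ (Real.sin ∘ fun t : ℝ => t / 2) x :=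
    AnalyticAt.comp (analyticAt_rsin _) hhalf
  exact analyticAt_const.mul hcomp

lemma hasDerivAt_B0 (x : ℝ) :
    HasDerivAt (fun t : ℝ => 2 * Real.sin (t / 2)) (Real.cos (x / 2)) x := by
  have h := ((Real.hasDerivAt_sin (x / 2)).comp x ((hasDerivAt_id x).div_const 2)).const_mul 2
  simpa using h.congr_deriv (by ring)

lemma halfcube (y : ℝ) (hy : |y| ≤ 1) : |y - Real.sin y| ≤ |y| ^ 3 := by
  have key : ∀ z : ℝ, 0 < z → z ≤ 1 → |z - Real.sin z| ≤ |z| ^ 3 := by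
    intro z hz hz1
    have h1 : Real.sin z ≤ z := Real.sin_le hz.le
    have h2 : z - z ^ 3 / 4 < Real.sin z := by
      have := Real.sin_gt_sub_cube hz
      nlinarith [pow_pos hz 3]
    rw [abs_of_pos hz, abs_of_nonneg (by linarith)]
    nlinarith [pow_pos hz 3]
  rcases lt_trichotomy y 0 with hy0 | rfl | hy0
  · have h := key (-y) (by linarith) (by rw [abs_of_neg hy0] at hy; linarith)
    rw [Real.sin_neg, abs_neg] at h
    have he : -y - -Real.sin y = -(y - Real.sin y) := by ring
    rw [he, abs_neg] at h
    exact h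
  · simp
  · exact key y hy0 (by rwa [abs_of_pos hy0] at hy)

/-- pure algebraic estimate -/
lemma bound_aux (x s c : ℝ) (hx : 0 < x) (hs_pos : 0 < s) (hsx : s ≤ x)
    (hc_pos : 0 < c) (hc1 : c ≤ 1) (hcub : 1 - x ^ 2 / 2 ≤ c)
    (hs2 : 2 / Real.pi * x ≤ s) (hsc : x * c ≤ s) :
    |s ^ 2 - x ^ 2 * c| ≤ 4 * x ^ 2 * s ^ 2 * (1 / Real.pi) := by
  have hpi := Real.pi_gt_three
  have hpi4 := Real.pi_le_four
  have hpi315 := Real.pi_lt_d2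
  rw [abs_le]
  constructor
  · rw [neg_le, neg_sub]
    by_cases hc8 : c ≤ Real.pi / 8
    · have hs2' : (2 / Real.pi * x) ^ 2 ≤ s ^ 2 :=
        pow_le_pow_left₀ (by positivity) hs2 2
      have h32 : Real.pi ^ 3 ≤ 32 := by
        have h1 : Real.pi ^ 3 ≤ 3.15 ^ 3 := pow_le_pow_left₀ Real.pi_pos.le hpi315.le 3
        nlinarith [h1]
      have hxcs : x ^ 2 * c ≤ s ^ 2 := by
        have hkey : Real.pi / 8 ≤ 4 / Real.pi ^ 2 := by
          rw [div_le_div_iff₀ (by norm_num) (by positivity)]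
          nlinarith [h32]
        calc x ^ 2 * c ≤ x ^ 2 * (Real.pi / 8) := by gcongr
        _ ≤ x ^ 2 * (4 / Real.pi ^ 2) := by gcongr
        _ = (2 / Real.pi * x) ^ 2 := by
            rw [mul_pow, div_pow]
            ring
        _ ≤ s ^ 2 := hs2'
      have hpos : (0:ℝ) ≤ 4 * x ^ 2 * s ^ 2 * (1 / Real.pi) := by positivity
      linarith
    · push_neg at hc8
      have hxc2 : (x * c) ^ 2 ≤ s ^ 2 := pow_le_pow_left₀ (by positivity) hsc 2
      have step1 : x ^ 2 * c - s ^ 2 ≤ x ^ 2 * c * (1 - c) := by nlinarith [hxc2]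
      have step2 : 1 - c ≤ 4 / Real.pi * (x ^ 2 * c) := by
        have hh : 1 - c ≤ x ^ 2 / 2 := by linarith
        have h8 : x ^ 2 / 2 ≤ 4 / Real.pi * (x ^ 2 * c) := by
          rw [div_mul_eq_mul_div, le_div_iff₀ (by linarith)]
          nlinarith [sq_nonneg x]
        linarith
      calc x ^ 2 * c - s ^ 2 ≤ x ^ 2 * c * (4 / Real.pi * (x ^ 2 * c)) := by
            refine step1.trans ?_
            exact mul_le_mul_of_nonneg_left step2 (by positivity)
      _ = 4 / Real.pi * (x ^ 2 * (x * c) ^ 2) := by ring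
      _ ≤ 4 / Real.pi * (x ^ 2 * s ^ 2) := by gcongr
      _ = 4 * x ^ 2 * s ^ 2 * (1 / Real.pi) := by ring
  · have hs2x2 : s ^ 2 ≤ x ^ 2 := by nlinarith [hsx, hs_pos]
    have hsc2 : s ^ 2 * c ≤ x ^ 2 * c := mul_le_mul_of_nonneg_right hs2x2 hc_pos.le
    have h1 : s ^ 2 - x ^ 2 * c ≤ s ^ 2 * (1 - c) := by nlinarith [hsc2]
    have h2 : s ^ 2 * (1 - c) ≤ s ^ 2 * (x ^ 2 / 2) :=
      mul_le_mul_of_nonneg_left (by linarith) (by positivity)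
    have hu : (0:ℝ) < x ^ 2 * s ^ 2 := by positivity
    have e1 : s ^ 2 * (x ^ 2 / 2) ≤ 4 * x ^ 2 * s ^ 2 * (1 / 4) := by linarith [hu]
    have hpp : (1:ℝ) / 4 ≤ 1 / Real.pi := by
      rw [div_le_div_iff₀ (by norm_num) Real.pi_pos]
      linarith
    have e2 : 4 * x ^ 2 * s ^ 2 * (1 / 4) ≤ 4 * x ^ 2 * s ^ 2 * (1 / Real.pi) :=
      mul_le_mul_of_nonneg_left hpp (by positivity)
    linarith

/-- the key derivative bound -/
lemma absD_le (t : ℝ) (ht : 0 < t) (ht2 : t < Real.pi) :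
    |(t ^ 2)⁻¹ - Real.cos (t / 2) / (2 * Real.sin (t / 2)) ^ 2| ≤ 1 / Real.pi := by
  have hpi := Real.pi_gt_three
  have hx : 0 < t / 2 := by linarith
  have hx2 : t / 2 < Real.pi / 2 := by linarith
  have hs_pos : 0 < Real.sin (t / 2) := Real.sin_pos_of_pos_of_lt_pi hx (by linarith)
  have hsx : Real.sin (t / 2) ≤ t / 2 := Real.sin_le hx.le
  have hc_pos : 0 < Real.cos (t / 2) := Real.cos_pos_of_mem_Ioo ⟨by linarith, hx2⟩
  have hc1 : Real.cos (t / 2) ≤ 1 := Real.cos_le_one _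
  have hcub : 1 - (t / 2) ^ 2 / 2 ≤ Real.cos (t / 2) := Real.one_sub_sq_div_two_le_cos
  have hs2 : 2 / Real.pi * (t / 2) ≤ Real.sin (t / 2) := Real.mul_le_sin hx.le (by linarith)
  have hsc : t / 2 * Real.cos (t / 2) ≤ Real.sin (t / 2) := by
    have h := Real.le_tan hx.le hx2
    rw [Real.tan_eq_sin_div_cos] at h
    calc t / 2 * Real.cos (t / 2) ≤ Real.sin (t / 2) / Real.cos (t / 2) * Real.cos (t / 2) := by
          gcongr
    _ = Real.sin (t / 2) := by field_simp
  have key := bound_aux (t / 2) (Real.sin (t / 2)) (Real.cos (t / 2)) hx hs_pos hsx hc_pos hc1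
    hcub hs2 hsc
  have hD : (t ^ 2)⁻¹ - Real.cos (t / 2) / (2 * Real.sin (t / 2)) ^ 2
      = (Real.sin (t / 2) ^ 2 - (t / 2) ^ 2 * Real.cos (t / 2))
        / (4 * (t / 2) ^ 2 * Real.sin (t / 2) ^ 2) := by
    have ht' : t ≠ 0 := ne_of_gt ht
    have hs' : Real.sin (t / 2) ≠ 0 := ne_of_gt hs_pos
    field_simp
    ring
  rw [hD, abs_div, abs_of_pos (by positivity : (0:ℝ) < 4 * (t / 2) ^ 2 * Real.sin (t / 2) ^ 2)]
  calc |Real.sin (t / 2) ^ 2 - (t / 2) ^ 2 * Real.cos (t / 2)|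
        / (4 * (t / 2) ^ 2 * Real.sin (t / 2) ^ 2)
      ≤ (4 * (t / 2) ^ 2 * Real.sin (t / 2) ^ 2 * (1 / Real.pi))
        / (4 * (t / 2) ^ 2 * Real.sin (t / 2) ^ 2) := by gcongr
  _ = 1 / Real.pi := by
      rw [mul_comm, mul_div_assoc,
        div_self (by positivity : (4 * (t / 2) ^ 2 * Real.sin (t / 2) ^ 2 : ℝ) ≠ 0), mul_one]

lemma sin_half_ne (t : ℝ) (h0 : t ≠ 0) (h1 : |t| < 2 * Real.pi) : Real.sin (t / 2) ≠ 0 := by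
  obtain ⟨ha, hb⟩ := abs_lt.1 h1
  intro h
  have := (Real.sin_eq_zero_iff_of_lt_of_lt (by linarith) (by linarith)).1 h
  exact h0 (by linarith)

lemma hfun_eq (t : ℝ) (h0 : t ≠ 0) :
    hfun t = 1 / (2 * Real.sin (t / 2)) - 1 / t := if_neg h0

/-- `hfun` is `C¹` near `0`. -/
lemma contDiffAt_hfun_zero : ContDiffAt ℝ 1 hfun 0 := by
  obtain ⟨p, hp⟩ := analyticAt_g 0
  obtain ⟨pb, hpb⟩ := analyticAt_B0 0
  set g : ℝ → ℝ := fun t => t - 2 * Real.sin (t / 2) with hgdef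
  set B0 : ℝ → ℝ := fun t => 2 * Real.sin (t / 2) with hB0def
  set g1 := dslope g 0 with hg1def
  set g2 := dslope g1 0 with hg2def
  set B1 := dslope B0 0 with hB1def
  have hp1 : HasFPowerSeriesAt g1 p.fslope 0 := hp.has_fpower_series_dslope_fslope
  have hp2 : HasFPowerSeriesAt g2 p.fslope.fslope 0 := hp1.has_fpower_series_dslope_fslope
  have hq1 : HasFPowerSeriesAt B1 pb.fslope 0 := hpb.has_fpower_series_dslope_fslope
  have hg0 : g 0 = 0 := by simp [hgdef]
  have hB00 : B0 0 = 0 := by simp [hB0def]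
  have hdg : HasDerivAt g 0 0 := by
    have h := (hasDerivAt_id (0:ℝ)).sub (hasDerivAt_B0 0)
    exact h.congr_deriv (by norm_num)
  have hg1_0 : g1 0 = 0 := by rw [hg1def, dslope_same]; exact hdg.deriv
  have hB1_0 : B1 0 = 1 := by
    rw [hB1def, dslope_same, (hasDerivAt_B0 0).deriv]
    norm_num
  have hg1_ne : ∀ t : ℝ, t ≠ 0 → g1 t = g t / t := by
    intro t ht
    rw [hg1def, dslope_of_ne _ ht, slope_def_field, hg0, sub_zero, sub_zero]
  have hg2_ne : ∀ t : ℝ, t ≠ 0 → g2 t = g t / t ^ 2 := by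
    intro t ht
    rw [hg2def, dslope_of_ne _ ht, slope_def_field, hg1_0, sub_zero, sub_zero, hg1_ne t ht,
      div_div, ← pow_two]
  have hB1_ne : ∀ t : ℝ, t ≠ 0 → B1 t = B0 t / t := by
    intro t ht
    rw [hB1def, dslope_of_ne _ ht, slope_def_field, hB00, sub_zero, sub_zero]
  -- dslope g1 at 0 has derivative 0 there
  have hg1' : HasDerivAt g1 0 0 := by
    rw [hasDerivAt_iff_tendsto_slope]
    apply squeeze_zero_norm' (a := fun t : ℝ => |t|)
    · filter_upwards [self_mem_nhdsWithin,
        inter_mem_nhdsWithin _ (Metric.ball_mem_nhds (0:ℝ) one_pos)] with t ht ht1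
      have htne : t ≠ 0 := ht
      have ht1' : |t| < 1 := by simpa [Real.dist_eq] using ht1.2
      have hy : |t / 2| ≤ 1 := by rw [abs_div, abs_two]; linarith
      have hcube := halfcube (t / 2) hy
      have hgt : |g t| ≤ |t| ^ 3 := by
        have : g t = 2 * (t / 2 - Real.sin (t / 2)) := by simp [hgdef]; ring
        rw [this, abs_mul, abs_two]
        have h8 : |t / 2| ^ 3 = |t| ^ 3 / 8 := by
          rw [abs_div, abs_two, div_pow]
          norm_num
        rw [h8] at hcube
        linarith [pow_nonneg (abs_nonneg t) 3]
      have htpos : 0 < |t| := abs_pos.2 htne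
      have hslope : slope g1 0 t = g t / (t * t) := by
        rw [slope_def_field, hg1_0, hg1_ne t htne]
        field_simp
        ring
      rw [hslope, Real.norm_eq_abs, abs_div, div_le_iff₀ (by positivity : (0:ℝ) < |t * t|)]
      calc |g t| ≤ |t| ^ 3 := hgt
      _ = |t| * (|t| * |t|) := by ring
      _ = |t| * |t * t| := by rw [abs_mul]
    · have : Tendsto (fun t : ℝ => |t|) (𝓝 0) (𝓝 |0|) := continuous_abs.continuousAt
      simpa using this.mono_left nhdsWithin_le_nhds
  have hg2_0 : g2 0 = 0 := by rw [hg2def, dslope_same]; exact hg1'.deriv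
  -- the smooth local model
  set q : ℝ → ℝ := fun t => g2 t / B1 t with hqdef
  have hq_cd : ContDiffAt ℝ 1 q 0 := by
    have h2 : AnalyticAt ℝ g2 0 := ⟨_, hp2⟩
    have h3 : AnalyticAt ℝ B1 0 := ⟨_, hq1⟩
    exact (h2.contDiffAt).div (h3.contDiffAt) (by rw [hB1_0]; norm_num)
  have heq : hfun =ᶠ[𝓝 0] q := by
    have hmem : Metric.ball (0:ℝ) 1 ∈ 𝓝 (0:ℝ) := Metric.ball_mem_nhds _ one_pos
    filter_upwards [hmem] with t ht
    have ht1 : |t| < 1 := by simpa [Real.dist_eq] using ht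
    by_cases h0 : t = 0
    · subst h0
      simp [hfun, hqdef, hg2_0, hB1_0]
    · have hsin : Real.sin (t / 2) ≠ 0 := by
        apply sin_half_ne t h0
        nlinarith [Real.pi_gt_three]
      rw [hfun_eq t h0]
      show _ = g2 t / B1 t
      rw [hg2_ne t h0, hB1_ne t h0]
      simp only [hgdef, hB0def]
      field_simp
  exact hq_cd.congr_of_eventuallyEq heq

/-- away from zero and below `2π`, `hfun` agrees with an explicit expression near `x`. -/
lemma hfun_eventuallyEq (x : ℝ) (hx : 0 < x) (hx2 : x < 2 * Real.pi) :
    hfun =ᶠ[𝓝 x] fun t => (2 * Real.sin (t / 2))⁻¹ - t⁻¹ := by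
  have hmem : Set.Ioo (0:ℝ) (2 * Real.pi) ∈ 𝓝 x := by
    apply isOpen_Ioo.mem_nhds; exact ⟨hx, hx2⟩
  filter_upwards [hmem] with t ht
  rw [hfun_eq t (ne_of_gt ht.1)]
  rw [one_div, one_div]

lemma contDiffAt_hfun_pos (x : ℝ) (hx : 0 < x) (hx2 : x < 2 * Real.pi) :
    ContDiffAt ℝ 1 hfun x := by
  have hsin : Real.sin (x / 2) ≠ 0 :=
    ne_of_gt (Real.sin_pos_of_pos_of_lt_pi (by linarith) (by linarith))
  have hF : ContDiffAt ℝ 1 (fun t : ℝ => (2 * Real.sin (t / 2))⁻¹ - t⁻¹) x := by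
    have h1 : ContDiffAt ℝ 1 (fun t : ℝ => 2 * Real.sin (t / 2)) x := by
      have h0 : ContDiff ℝ 1 fun t : ℝ => 2 * Real.sin (t / 2) :=
        contDiff_const.mul (Real.contDiff_sin.comp (contDiff_id.div_const 2))
      exact h0.contDiffAt
    have hne : (2:ℝ) * Real.sin (x / 2) ≠ 0 := mul_ne_zero two_ne_zero hsin
    exact (h1.inv hne).sub (contDiffAt_inv ℝ (ne_of_gt hx))
  exact hF.congr_of_eventuallyEq (hfun_eventuallyEq x hx hx2)

lemma deriv_hfun (t : ℝ) (ht : 0 < t) (ht2 : t < Real.pi) :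
    deriv hfun t = (t ^ 2)⁻¹ - Real.cos (t / 2) / (2 * Real.sin (t / 2)) ^ 2 := by
  have hsin : Real.sin (t / 2) ≠ 0 :=
    ne_of_gt (Real.sin_pos_of_pos_of_lt_pi (by linarith) (by linarith))
  have h2s : (2 : ℝ) * Real.sin (t / 2) ≠ 0 := by simp [hsin]
  have heq := hfun_eventuallyEq t ht (by linarith [Real.pi_pos])
  rw [heq.deriv_eq]
  have h1 : HasDerivAt (fun u : ℝ => (2 * Real.sin (u / 2))⁻¹)
      (-Real.cos (t / 2) / (2 * Real.sin (t / 2)) ^ 2) t := by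
    have := (hasDerivAt_B0 t).inv h2s
    exact this
  have h2 : HasDerivAt (fun u : ℝ => u⁻¹) (-(t ^ 2)⁻¹) t := hasDerivAt_inv (ne_of_gt ht)
  have h := h1.sub h2
  rw [HasDerivAt.deriv (f := fun u : ℝ => (2 * Real.sin (u / 2))⁻¹ - u⁻¹) h]
  ring

theorem hfun_regularity :
    ContDiffOn ℝ 1 hfun (Set.Icc 0 Real.pi) ∧
    (∀ t ∈ Set.Ioo (0:ℝ) Real.pi, |deriv hfun t| ≤ 1 / Real.pi) ∧
    hfun Real.pi = 1 / 2 - 1 / Real.pi ∧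
    (1 / 2 - 1 / Real.pi : ℝ) ≤ 1 / 2 := by
  refine ⟨?_, ?_, ?_, ?_⟩
  · intro x hx
    rcases eq_or_lt_of_le hx.1 with h0 | h0
    · exact (h0 ▸ contDiffAt_hfun_zero).contDiffWithinAt
    · exact (contDiffAt_hfun_pos x h0 (by linarith [hx.2, Real.pi_pos])).contDiffWithinAt
  · intro t ht
    rw [deriv_hfun t ht.1 ht.2]
    exact absD_le t ht.1 ht.2
  · rw [hfun_eq Real.pi (ne_of_gt Real.pi_pos)]
    rw [Real.sin_pi_div_two]
    norm_num
  · have := Real.pi_pos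
    have : 0 < 1 / Real.pi := by positivity
    linarith
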